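/- Convexity of a prosumer's penalty share in its own offer (key step in the existence proof of Theorem 1): let s, S, c ∈ ℝ and λ ≥ 0 satisfy S ≥ 0 and s ≤ S. Then the function g : ℝ → ℝ defined by g(x) = λ · (s + x − c)⁺ · (x − c)⁺ / (S + (x − c)⁺), with the convention g(x) = 0 whenever S + (x − c)⁺ = 0, is convex on ℝ. -/

import Mathlib

open Set

set_option maxHeartbeats 1600000 in
/-- Convexity of a prosumer's penalty share in its own offer: for `S ≥ 0`,
`s ≤ S` and `λ ≥ 0`, the map
`x ↦ λ (s + x - c)⁺ (x - c)⁺ / (S + (x - c)⁺)` (set to `0` when the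
denominator vanishes) is convex on `ℝ`. -/
theorem penalty_share_convex (lam s S c : ℝ) (hlam : 0 ≤ lam)
    (hS : 0 ≤ S) (hsS : s ≤ S) :
    ConvexOn ℝ Set.univ (fun x : ℝ =>
      if S + max (x - c) 0 = 0 then 0
      else lam * max (s + x - c) 0 * max (x - c) 0 / (S + max (x - c) 0)) := by
  rcases eq_or_lt_of_le hS with hS0 | hSpos
  · -- case S = 0
    subst hS0
    have hfun : (fun x : ℝ =>
        if (0:ℝ) + max (x - c) 0 = 0 then 0
        else lam * max (s + x - c) 0 * max (x - c) 0 / ((0:ℝ) + max (x - c) 0))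
        = fun x : ℝ => lam * max (s + x - c) 0 := by
      funext x
      rcases le_or_gt x c with h | h
      · rw [max_eq_right (by linarith : x - c ≤ 0), if_pos (by ring),
          max_eq_right (by linarith : s + x - c ≤ 0), mul_zero]
      · rw [max_eq_left (by linarith : (0:ℝ) ≤ x - c), if_neg (by simp; linarith),
          zero_add, mul_div_assoc, div_self (by linarith : x - c ≠ 0), mul_one]
    rw [hfun]
    have h1 : ConvexOn ℝ (univ : Set ℝ) (fun x => s + x - c) := by
      refine ⟨convex_univ, fun x _ y _ a b ha hb hab => le_of_eq ?_⟩
      simp only [smul_eq_mul]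
      linear_combination (c - s) * hab
    have h2 := (h1.sup (convexOn_const 0 convex_univ)).smul hlam
    simpa [Pi.sup_def, smul_eq_mul] using h2
  · -- case 0 < S
    obtain ⟨t0, ht0def⟩ : ∃ t : ℝ, t = max 0 (-s) := ⟨_, rfl⟩
    have ht0 : 0 ≤ t0 := ht0def ▸ le_max_left _ _
    have ht0s : 0 ≤ t0 + s := by
      have := le_max_right 0 (-s); rw [← ht0def] at this; linarith
    have hzero : t0 * (t0 + s) = 0 := by
      rcases max_choice 0 (-s) with h | h
      · rw [← ht0def] at h; rw [h, zero_mul]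
      · rw [← ht0def] at h; rw [h]; ring
    have hd0 : 0 < S + t0 := by linarith
    have hβ : 0 ≤ S * (S - s) := mul_nonneg hSpos.le (by linarith)
    have hA : 0 ≤ 1 - S * (S - s) / (S + t0) ^ 2 := by
      rw [sub_nonneg, div_le_one (by positivity)]
      nlinarith [mul_nonneg hSpos.le ht0s]
    obtain ⟨A, hAdef⟩ : ∃ a : ℝ, a = 1 - S * (S - s) / (S + t0) ^ 2 := ⟨_, rfl⟩
    rw [← hAdef] at hA
    obtain ⟨q, hqdef⟩ : ∃ f : ℝ → ℝ, f = fun x =>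
        S * (S - s) / (S + t0) ^ 2 * (x - c) + (s - S + A * t0)
          + S * (S - s) * (S + x - c)⁻¹ := ⟨_, rfl⟩
    -- q is convex on Ici (c + t0)
    have hinv : ConvexOn ℝ (Ici (c + t0)) (fun x => (S + x - c)⁻¹) := by
      refine ⟨convex_Ici _, fun x hx y hy a b ha hb hab => ?_⟩
      simp only [smul_eq_mul]
      have hdx : 0 < S + x - c := by have := mem_Ici.mp hx; linarith
      have hdy : 0 < S + y - c := by have := mem_Ici.mp hy; linarith
      have hkey : S + (a * x + b * y) - c = a * (S + x - c) + b * (S + y - c) := by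
        linear_combination (c - S) * hab
      rw [hkey]
      have hsum : 0 < a * (S + x - c) + b * (S + y - c) := by
        nlinarith [mul_nonneg ha (sub_nonneg.2 (min_le_left (S + x - c) (S + y - c))),
          mul_nonneg hb (sub_nonneg.2 (min_le_right (S + x - c) (S + y - c))),
          lt_min hdx hdy]
      rw [inv_eq_one_div, inv_eq_one_div, inv_eq_one_div, mul_one_div, mul_one_div,
        div_add_div _ _ (ne_of_gt hdx) (ne_of_gt hdy), div_le_div_iff₀ hsum (by positivity)]
      have h1 : (a + b) ^ 2 = 1 := by rw [hab]; ring
      nlinarith [mul_nonneg (mul_nonneg ha hb) (sq_nonneg ((S + x - c) - (S + y - c))),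
        mul_pos hdx hdy, h1]
    have haff : ConvexOn ℝ (Ici (c + t0))
        (fun x => S * (S - s) / (S + t0) ^ 2 * (x - c) + (s - S + A * t0)) := by
      refine ⟨convex_Ici _, fun x _ y _ a b ha hb hab => le_of_eq ?_⟩
      simp only [smul_eq_mul]
      linear_combination (S * (S - s) / (S + t0) ^ 2 * c - (s - S + A * t0)) * hab
    have hsm : ConvexOn ℝ (Ici (c + t0)) (fun x => S * (S - s) * (S + x - c)⁻¹) := by
      have := hinv.smul hβ
      simpa [smul_eq_mul] using this
    have hqconv : ConvexOn ℝ (Ici (c + t0)) q := by rw [hqdef]; exact haff.add hsm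
    -- q is monotone on Ici (c + t0)
    have hqmono : MonotoneOn q (Ici (c + t0)) := by
      intro x hx y hy hxy
      have hdx : 0 < S + x - c := by have := mem_Ici.mp hx; linarith
      have hdy : 0 < S + y - c := by have := mem_Ici.mp hy; linarith
      have hdx0 : S + t0 ≤ S + x - c := by have := mem_Ici.mp hx; linarith
      have hdy0 : S + t0 ≤ S + y - c := by have := mem_Ici.mp hy; linarith
      have expand : q y - q x = S * (S - s) * (y - x)
          * ((S + x - c) * (S + y - c) - (S + t0) ^ 2)
          / ((S + t0) ^ 2 * ((S + x - c) * (S + y - c))) := by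
        rw [hqdef]
        field_simp
        ring
      have hnum : 0 ≤ S * (S - s) * (y - x)
          * ((S + x - c) * (S + y - c) - (S + t0) ^ 2) := by
        apply mul_nonneg (mul_nonneg hβ (by linarith))
        nlinarith
      have : 0 ≤ q y - q x := by
        rw [expand]; exact div_nonneg hnum (by positivity)
      linarith
    -- convexity of x ↦ max x (c + t0)
    have hmaxconv : ConvexOn ℝ (univ : Set ℝ) (fun x : ℝ => max x (c + t0)) := by
      refine ⟨convex_univ, fun x _ y _ a b ha hb hab => ?_⟩
      simp only [smul_eq_mul]
      apply max_le
      · have h1 := mul_le_mul_of_nonneg_left (le_max_left x (c + t0)) ha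
        have h2 := mul_le_mul_of_nonneg_left (le_max_left y (c + t0)) hb
        linarith
      · have h1 := mul_le_mul_of_nonneg_left (le_max_right x (c + t0)) ha
        have h2 := mul_le_mul_of_nonneg_left (le_max_right y (c + t0)) hb
        have h3 : a * (c + t0) + b * (c + t0) = c + t0 := by
          linear_combination (c + t0) * hab
        linarith
    have himg : (fun x : ℝ => max x (c + t0)) '' univ = Ici (c + t0) := by
      apply Set.eq_of_subset_of_subset
      · rintro y ⟨w, -, rfl⟩
        simp only [mem_Ici]
        exact le_max_right _ _
      · intro y hy
        exact ⟨y, trivial, max_eq_left (mem_Ici.mp hy)⟩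
    have hcomp : ConvexOn ℝ (univ : Set ℝ) (q ∘ fun x : ℝ => max x (c + t0)) := by
      refine ConvexOn.comp ?_ hmaxconv ?_
      · rw [himg]; exact hqconv
      · rw [himg]; exact hqmono
    -- convexity of x ↦ max (x - (c + t0)) 0
    have hpart1 : ConvexOn ℝ (univ : Set ℝ) (fun x : ℝ => max (x - (c + t0)) 0) := by
      have h1 : ConvexOn ℝ (univ : Set ℝ) (fun x : ℝ => x - (c + t0)) := by
        refine ⟨convex_univ, fun x _ y _ a b ha hb hab => le_of_eq ?_⟩
        simp only [smul_eq_mul]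
        linear_combination (c + t0) * hab
      have := h1.sup (convexOn_const 0 convex_univ)
      simpa [Pi.sup_def] using this
    have total := (hpart1.smul (mul_nonneg hlam hA)).add (hcomp.smul hlam)
    have hfun : (fun x : ℝ =>
        if S + max (x - c) 0 = 0 then 0
        else lam * max (s + x - c) 0 * max (x - c) 0 / (S + max (x - c) 0))
        = fun x : ℝ => (lam * A) • max (x - (c + t0)) 0
            + lam • (q ∘ fun x : ℝ => max x (c + t0)) x := by
      funext x
      simp only [smul_eq_mul, Function.comp_apply]
      have hdenpos : 0 < S + max (x - c) 0 := by
        have := le_max_right (x - c) 0; linarith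
      rw [if_neg (ne_of_gt hdenpos)]
      rcases le_or_gt x (c + t0) with hx | hx
      · rw [max_eq_right (by linarith : x - (c + t0) ≤ 0),
          max_eq_right hx, mul_zero]
        have hq0 : q (c + t0) = 0 := by
          simp only [hqdef, hAdef]
          have h1 : S + (c + t0) - c = S + t0 := by ring
          rw [h1]
          field_simp
          linear_combination (S + t0) * hzero
        rw [hq0, mul_zero, add_zero]
        rcases le_or_gt x c with hxc | hxc
        · rw [max_eq_right (by linarith : x - c ≤ 0), mul_zero, zero_div]
        · have ht0pos : 0 < t0 := by linarith
          have ht0s' : t0 = -s := by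
            rcases max_choice 0 (-s) with h | h
            · rw [← ht0def] at h; rw [h] at ht0pos; exact absurd ht0pos (lt_irrefl 0)
            · rw [← ht0def] at h; exact h
          rw [max_eq_right (by linarith : s + x - c ≤ 0), mul_zero, zero_mul, zero_div]
      · have h1 : max (x - (c + t0)) 0 = x - (c + t0) := max_eq_left (by linarith)
        have h2 : max x (c + t0) = x := max_eq_left hx.le
        have h3 : max (x - c) 0 = x - c := max_eq_left (by linarith)
        have h4 : max (s + x - c) 0 = s + x - c := max_eq_left (by linarith)
        have hdx : 0 < S + x - c := by linarith
        have hqx : q x = (x - c) + s - S - A * (x - (c + t0))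
            + S * (S - s) * (S + x - c)⁻¹ := by
          simp only [hqdef, hAdef]
          field_simp [hdx.ne', hd0.ne']
          ring
        rw [h1, h2, h3, h4, hqx]
        have hne2 : S + (x - c) ≠ 0 := by intro h; linarith
        have hne3 : S + x - c ≠ 0 := by intro h; linarith
        rw [div_eq_iff hne2]
        field_simp [hne3]
        ring
    rw [hfun]
    simpa [Pi.add_def] using total
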